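/- Let U be the seed transformation of a classically-enhanced subsystem convolutional encoder, and let the same matrix U be re-interpreted as a stabilizer (standard quantum) convolutional encoder by re-designating all k_c classical bits and all g gauge qubits as ancilla qubits. Then for every logical input sequence whose classical part is identity in every frame (L_{c,t}^x = 0 for all t), the logical coset C'((L_{q,t})) of the stabilizer encoder is a subset of the logical coset C(((L_{q,t} : 0))) of the original classically-enhanced subsystem encoder. Consequently, if every element of the original coset has infinite weight, then every element of the stabilizer coset has infinite weight; in particular, if the original encoder is recursive then the stabilizer encoder obtained by this re-designation is recursive. -/

import Mathlib

abbrev F2 := ZMod 2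

abbrev Pauli (ι : Type) : Type := ι → F2 × F2

/-- The weight of a Pauli operator: the number of qubits on which it acts nontrivially. -/
def pWeight {ι : Type} [Fintype ι] (p : Pauli ι) : ℕ :=
  (Finset.univ.filter fun i => p i ≠ 0).card

/-- A Pauli is pure-Z if its X-part vanishes. -/
def pureZ {ι : Type} (p : Pauli ι) : Prop := ∀ i, (p i).1 = 0

/-- A Pauli is pure-X if its Z-part vanishes. -/
def pureX {ι : Type} (p : Pauli ι) : Prop := ∀ i, (p i).2 = 0

/-- The binary symplectic form. -/
def sympl {ι : Type} [Fintype ι] (p q : Pauli ι) : F2 :=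
  ∑ i, ((p i).1 * (q i).2 + (p i).2 * (q i).1)

/-- A classically-enhanced subsystem convolutional encoder. -/
abbrev CEEnc (m kq a kc g n : ℕ) : Type :=
  Pauli (Fin m ⊕ Fin kq ⊕ Fin a ⊕ Fin kc ⊕ Fin g) ≃ₗ[F2] Pauli (Fin m ⊕ Fin n)

variable {m kq a kc g n : ℕ}

/-- Assemble the blocks (M : L_q : S : C : G) into one input vector. -/
def ceInput (M : Pauli (Fin m)) (Lq : Pauli (Fin kq)) (S : Pauli (Fin a))
    (C : Pauli (Fin kc)) (G : Pauli (Fin g)) :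
    Pauli (Fin m ⊕ Fin kq ⊕ Fin a ⊕ Fin kc ⊕ Fin g) :=
  Sum.elim M (Sum.elim Lq (Sum.elim S (Sum.elim C G)))

/-- The memory part M' of an output vector (M' : P). -/
def outMem (w : Pauli (Fin m ⊕ Fin n)) : Pauli (Fin m) := fun i => w (Sum.inl i)

/-- The physical part P of an output vector (M' : P). -/
def outPhys (w : Pauli (Fin m ⊕ Fin n)) : Pauli (Fin n) := fun i => w (Sum.inr i)

/-- The logical coset of the classically-enhanced subsystem encoder: for each frame,
arbitrary pure-Z `Sz` on the ancillas, pure-Z `Cz` on the classical bits and arbitrary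
`G` on the gauge qubits. -/
def CEInCoset (U : CEEnc m kq a kc g n) (Lq : ℕ → Pauli (Fin kq))
    (Lcx : ℕ → Pauli (Fin kc)) (P : ℕ → Pauli (Fin n)) : Prop :=
  ∃ (M : ℕ → Pauli (Fin m)) (Sz : ℕ → Pauli (Fin a)) (Cz : ℕ → Pauli (Fin kc))
    (G : ℕ → Pauli (Fin g)),
    M 0 = 0 ∧ (∀ t, pureZ (Sz t)) ∧ (∀ t, pureZ (Cz t)) ∧
    ∀ t, M (t + 1) = outMem (U (ceInput (M t) (Lq t) (Sz t) (Lcx t + Cz t) (G t))) ∧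
         P t = outPhys (U (ceInput (M t) (Lq t) (Sz t) (Lcx t + Cz t) (G t)))

/-- The logical coset of the stabilizer re-interpretation of the same matrix `U`:
all classical bits and gauge qubits are re-designated as ancilla qubits, so for each
frame one chooses an arbitrary pure-Z operator on all non-information positions. -/
def StabInCoset (U : CEEnc m kq a kc g n) (Lq : ℕ → Pauli (Fin kq))
    (P : ℕ → Pauli (Fin n)) : Prop :=
  ∃ (M : ℕ → Pauli (Fin m)) (Sz : ℕ → Pauli (Fin a)) (Cz : ℕ → Pauli (Fin kc))
    (Gz : ℕ → Pauli (Fin g)),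
    M 0 = 0 ∧ (∀ t, pureZ (Sz t)) ∧ (∀ t, pureZ (Cz t)) ∧ (∀ t, pureZ (Gz t)) ∧
    ∀ t, M (t + 1) = outMem (U (ceInput (M t) (Lq t) (Sz t) (Cz t) (Gz t))) ∧
         P t = outPhys (U (ceInput (M t) (Lq t) (Sz t) (Cz t) (Gz t)))

/-- Recursiveness of the classically-enhanced subsystem encoder. -/
def CERecursive (U : CEEnc m kq a kc g n) : Prop :=
  ∀ (Lq : ℕ → Pauli (Fin kq)) (Lcx : ℕ → Pauli (Fin kc)),
    (∀ t, pureX (Lcx t)) →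
    (∃ t0 : ℕ, pWeight (Lq t0) + pWeight (Lcx t0) = 1 ∧
      ∀ t, t ≠ t0 → Lq t = 0 ∧ Lcx t = 0) →
    ∀ P : ℕ → Pauli (Fin n), CEInCoset U Lq Lcx P → {t : ℕ | P t ≠ 0}.Infinite

/-- Recursiveness of the stabilizer re-interpretation of `U`. -/
def StabRecursive (U : CEEnc m kq a kc g n) : Prop :=
  ∀ Lq : ℕ → Pauli (Fin kq),
    (∃ t0 : ℕ, pWeight (Lq t0) = 1 ∧ ∀ t, t ≠ t0 → Lq t = 0) →
    ∀ P : ℕ → Pauli (Fin n), StabInCoset U Lq P → {t : ℕ | P t ≠ 0}.Infinite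

/-- For every logical input sequence whose classical part is identity in
every frame, the logical coset of the stabilizer re-interpretation is a subset of the
logical coset of the original classically-enhanced subsystem encoder; consequently, if
every element of the original coset has infinite weight then so does every element of the
stabilizer coset, and in particular recursiveness of the original encoder implies
recursiveness of the stabilizer encoder. -/
theorem stabilizer_coset_subset_CE_coset
    (hn : n = kq + a + kc + g)
    (U : CEEnc m kq a kc g n)
    (hsymp : ∀ v w, sympl (U v) (U w) = sympl v w) :
    (∀ (Lq : ℕ → Pauli (Fin kq)) (P : ℕ → Pauli (Fin n)),
      StabInCoset U Lq P → CEInCoset U Lq (fun _ => 0) P) ∧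
    (∀ Lq : ℕ → Pauli (Fin kq),
      (∀ P : ℕ → Pauli (Fin n), CEInCoset U Lq (fun _ => 0) P → {t : ℕ | P t ≠ 0}.Infinite) →
      ∀ P : ℕ → Pauli (Fin n), StabInCoset U Lq P → {t : ℕ | P t ≠ 0}.Infinite) ∧
    (CERecursive U → StabRecursive U) := by
  have hsub : ∀ (Lq : ℕ → Pauli (Fin kq)) (P : ℕ → Pauli (Fin n)),
      StabInCoset U Lq P → CEInCoset U Lq (fun _ => 0) P := by
    intro Lq P ⟨M, Sz, Cz, Gz, hM0, hSz, hCz, hGz, hrec⟩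
    refine ⟨M, Sz, Cz, Gz, hM0, hSz, hCz, ?_⟩
    intro t
    have : (fun _ : ℕ => (0 : Pauli (Fin kc))) t + Cz t = Cz t := by
      simp
    rw [this]
    exact hrec t
  refine ⟨hsub, fun Lq h P hP => h P (hsub Lq P hP), ?_⟩
  intro hCE Lq ⟨t0, hw, hz⟩ P hP
  have h0 : pWeight (0 : Pauli (Fin kc)) = 0 := by
    simp [pWeight]
  exact hCE Lq (fun _ => 0) (fun t i => rfl)
    ⟨t0, by rw [h0, hw], fun t ht => ⟨hz t ht, rfl⟩⟩ P (hsub Lq P hP)
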